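/- Let D be an almost skew diagram, let i be the maximum index with l_{i−1} > l_i, and suppose both Step A and Step B are permitted at row i. Let D^A (with column-preserving bijection φ) and D^B (with row-preserving bijection ψ) be the results of the two steps, all associated elements regarded in ℂ[Σ_D]. Then C(D^B)·σ·R(D^A) = 0 for every σ ∈ R_D; consequently, for any set Y of right coset representatives of R_D ∩ R_{D^A} in R_{D^A}, C(D^B)·R(D^B)·(Σ_{σ ∈ Y} σ) = 0, i.e., the Specht module V^{D^B} lies in the kernel of the module homomorphism T : V^D → V^{D^A} given by right multiplication by Σ_{σ ∈ Y} σ. -/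

import Mathlib

open scoped Classical

open scoped ENat

/-- A diagram: a finite set of boxes `(i, j)` (row `i` from the top, column `j` from the left). -/
abbrev Dg := Finset (ℕ × ℕ)

/-- The set of column indices of boxes in row `i` of `D`. -/
def row (D : Dg) (i : ℕ) : Finset ℕ := (D.filter (fun b => b.1 = i)).image Prod.snd

/-- `l_i`: the least column index in row `i`, with the convention `l_i = ∞` for an empty row. -/
noncomputable def lRow (D : Dg) (i : ℕ) : ℕ∞ := (row D i).inf (fun j => (j : ℕ∞))

/-- `r_i`: the greatest column index in row `i`, with the convention `r_i = 0` for an empty row. -/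
def rRow (D : Dg) (i : ℕ) : ℕ := (row D i).sup id

/-- Index `i ≥ 2` with `l_{i-1} > l_i`. -/
def Violation (D : Dg) (i : ℕ) : Prop := 2 ≤ i ∧ lRow D i < lRow D (i - 1)

/-- `i` is the maximum index with `l_{i-1} > l_i`. -/
def MaxViolation (D : Dg) (i : ℕ) : Prop := Violation D i ∧ ∀ i', Violation D i' → i' ≤ i

/-- No index `i ≥ 2` has `l_{i-1} > l_i`. -/
def TerminalD (D : Dg) : Prop := ∀ i, ¬ Violation D i

/-- Step A is permitted at row `i`: `l_{i-1} > l_i` and (`r_i ≥ l_{i-1} - 1` or row `i-1` empty). -/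
def StepAOk (D : Dg) (i : ℕ) : Prop :=
  Violation D i ∧ (lRow D (i - 1) - 1 ≤ (rRow D i : ℕ∞) ∨ row D (i - 1) = ∅)

/-- `l_i ≤ q < l_{i-1}`: the columns affected by Step A at row `i`. -/
def InL (D : Dg) (i q : ℕ) : Prop := lRow D i ≤ (q : ℕ∞) ∧ (q : ℕ∞) < lRow D (i - 1)

/-- `D'` is the result of performing Step A on `D` at row `i`: for each column
`l_i ≤ q < l_{i-1}`, membership of `(i, q)` and `(i-1, q)` is exchanged. -/
def IsStepA (D D' : Dg) (i : ℕ) : Prop :=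
  ∀ p q : ℕ,
    (p = i → InL D i q → ((p, q) ∈ D' ↔ (i - 1, q) ∈ D)) ∧
    (p = i - 1 → InL D i q → ((p, q) ∈ D' ↔ (i, q) ∈ D)) ∧
    (¬((p = i ∨ p = i - 1) ∧ InL D i q) → ((p, q) ∈ D' ↔ (p, q) ∈ D))

/-- Step B is permitted at row `i`: `l_{i-1} > l_i` and `r_i ≤ r_{i-1} - 1`. -/
def StepBOk (D : Dg) (i : ℕ) : Prop :=
  Violation D i ∧ rRow D i ≤ rRow D (i - 1) - 1

/-- The rows affected by Step B at row `i`: rows `p ≥ i` with `l_p = l_i`. -/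
def BRow (D : Dg) (i p : ℕ) : Prop := i ≤ p ∧ lRow D p = lRow D i

/-- `D'` is the result of performing Step B on `D` at row `i`: in each row `p ≥ i` with
`l_p = l_i`, the box `(p, l_p)` is removed and the box `(p, r_p + 1)` is added. -/
def IsStepB (D D' : Dg) (i : ℕ) : Prop :=
  ∀ p q : ℕ,
    (BRow D i p →
      ((p, q) ∈ D' ↔ (((p, q) ∈ D ∧ (q : ℕ∞) ≠ lRow D p) ∨ q = rRow D p + 1))) ∧
    (¬ BRow D i p → ((p, q) ∈ D' ↔ (p, q) ∈ D))

/-- One step of Algorithm 1: at the maximum index `i` with `l_{i-1} > l_i`, perform a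
permitted Step A or Step B. -/
def AlgStep (D D' : Dg) : Prop :=
  ∃ i, MaxViolation D i ∧ ((StepAOk D i ∧ IsStepA D D' i) ∨ (StepBOk D i ∧ IsStepB D D' i))

/-- An execution of Algorithm 1 starting from `D0`: a finite sequence of diagrams beginning
at `D0`, each obtained from the previous by a step of Algorithm 1, ending at a terminal
diagram. -/
def IsExec (D0 : Dg) (L : List Dg) : Prop :=
  L.head? = some D0 ∧ L.Chain' AlgStep ∧ ∀ Dl, L.getLast? = some Dl → TerminalD Dl

/-- The indices of nonempty rows of `D`, from top to bottom. -/
def rowIdx (D : Dg) : List ℕ := (D.image Prod.fst).sort (· ≤ ·)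

/-- The lengths of the nonempty rows of `D`, read from top to bottom. -/
def rowLengths (D : Dg) : List ℕ := (rowIdx D).map (fun p => (row D p).card)

/-- The execution `L` terminates at a diagram whose nonempty rows, read from top to bottom,
have lengths `ν 1, ν 2, …`. -/
def EndsAt (L : List Dg) (ν : ℕ → ℕ) : Prop :=
  ∃ Dl, L.getLast? = some Dl ∧ ∀ m : ℕ, (rowLengths Dl).getD m 0 = ν (m + 1)

/-- A partition, written as a weakly decreasing function on indices `1, 2, …`. -/
def IsPartition (f : ℕ → ℕ) : Prop := f 0 = 0 ∧ ∀ p, 1 ≤ p → f (p + 1) ≤ f p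

/-- The partition `f` is contained in the `k × w` rectangle. -/
def InRect (f : ℕ → ℕ) (k w : ℕ) : Prop := (∀ p, k < p → f p = 0) ∧ ∀ p, f p ≤ w

/-- The skew Young diagram `lam / mu` (boxes of `lam` not in `mu`), rows `1, …, k`. -/
def skewD (lam mu : ℕ → ℕ) (k : ℕ) : Dg :=
  (Finset.Icc 1 k).biUnion (fun p => (Finset.Icc (mu p + 1) (lam p)).image (fun q => (p, q)))

/-- `lam^∨`, the complementary partition of `lam` inside the `k × w` rectangle. -/
def dualP (lam : ℕ → ℕ) (k w : ℕ) : ℕ → ℕ :=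
  fun p => if 1 ≤ p ∧ p ≤ k then w - lam (k + 1 - p) else 0

/-- `D` is row convex. -/
def RowConvex (D : Dg) : Prop :=
  ∀ i j j' j'', (i, j) ∈ D → (i, j') ∈ D → j ≤ j'' → j'' ≤ j' → (i, j'') ∈ D

/-- `l` is weakly increasing on positions `s, s+1, …, t`. -/
def MonoL (l : ℕ → ℕ∞) (s t : ℕ) : Prop := ∀ p q, s ≤ p → p ≤ q → q ≤ t → l p ≤ l q

/-- `l` is weakly decreasing on positions `s, s+1, …, t`. -/
def AntiL (l : ℕ → ℕ∞) (s t : ℕ) : Prop := ∀ p q, s ≤ p → p ≤ q → q ≤ t → l q ≤ l p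

/-- The sequence `(l_1, …, l_k)` of leftmost column indices of `D` has, for some indices
`1 ≤ a ≤ i ≤ k`, either the form `l_i ≤ l_{i+1} ≤ … ≤ l_k ≤ l_{i-1} ≤ l_{i-2} ≤ … ≤ l_1`,
or the form
`l_a ≤ … ≤ l_{i-2} ≤ l_i ≤ … ≤ l_k ≤ l_{i-1} ≤ l_{a-1} ≤ … ≤ l_1`. -/
def LShape (D : Dg) (k : ℕ) : Prop :=
  ∃ a i, 1 ≤ a ∧ a ≤ i ∧ i ≤ k ∧
    ((MonoL (lRow D) i k ∧ (2 ≤ i → lRow D k ≤ lRow D (i - 1)) ∧ AntiL (lRow D) 1 (i - 1)) ∨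
     (2 ≤ i ∧ MonoL (lRow D) a (i - 2) ∧ (a ≤ i - 2 → lRow D (i - 2) ≤ lRow D i) ∧
      MonoL (lRow D) i k ∧ lRow D k ≤ lRow D (i - 1) ∧
      (2 ≤ a → lRow D (i - 1) ≤ lRow D (a - 1)) ∧ AntiL (lRow D) 1 (a - 1)))

/-- `D` is almost skew with nonempty rows exactly `1, …, k`: it is row convex, its `r_i`
are weakly decreasing, and its `l_i` satisfy one of the two inequality chains above. -/
def AlmostSkew (D : Dg) (k : ℕ) : Prop :=
  (∀ p, (row D p).Nonempty ↔ 1 ≤ p ∧ p ≤ k) ∧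
  RowConvex D ∧
  (∀ p q, 1 ≤ p → p ≤ q → q ≤ k → rRow D q ≤ rRow D p) ∧
  LShape D k

/-- The sum `Σ σ` over all permutations preserving the value of `g` (e.g. the row or the
column of every box), in the group algebra `ℂ[Perm α]`. -/
noncomputable def Rsum {α : Type} [Fintype α] [DecidableEq α] (g : α → ℕ) :
    MonoidAlgebra ℂ (Equiv.Perm α) :=
  ∑ σ ∈ Finset.univ.filter (fun σ : Equiv.Perm α => ∀ b, g (σ b) = g b),
    MonoidAlgebra.single σ 1

/-- The signed sum `Σ sgn(σ)·σ` over all permutations preserving the value of `g`, in the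
group algebra `ℂ[Perm α]`. -/
noncomputable def Csum {α : Type} [Fintype α] [DecidableEq α] (g : α → ℕ) :
    MonoidAlgebra ℂ (Equiv.Perm α) :=
  ∑ σ ∈ Finset.univ.filter (fun σ : Equiv.Perm α => ∀ b, g (σ b) = g b),
    MonoidAlgebra.single σ ((Equiv.Perm.sign σ : ℤ) : ℂ)

section Helpers

variable {α : Type} [Fintype α] [DecidableEq α]

private def Pg (g : α → ℕ) : Finset (Equiv.Perm α) :=
  Finset.univ.filter (fun σ : Equiv.Perm α => ∀ b, g (σ b) = g b)

private lemma mem_Pg {g : α → ℕ} {σ : Equiv.Perm α} : σ ∈ Pg g ↔ ∀ b, g (σ b) = g b := by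
  simp [Pg]

private lemma Csum_eq (g : α → ℕ) :
    Csum g = ∑ σ ∈ Pg g, MonoidAlgebra.single σ ((Equiv.Perm.sign σ : ℤ) : ℂ) := rfl

private lemma Rsum_eq (g : α → ℕ) :
    Rsum g = ∑ σ ∈ Pg g, MonoidAlgebra.single σ (1 : ℂ) := rfl

private lemma csum_mul_swap (g : α → ℕ) (τ : Equiv.Perm α) (hτ : ∀ b, g (τ b) = g b)
    (hs : Equiv.Perm.sign τ = -1) :
    Csum g * MonoidAlgebra.single τ (1:ℂ) = - Csum g := by
  rw [Csum_eq, Finset.sum_mul, ← Finset.sum_neg_distrib]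
  refine Finset.sum_nbij' (fun a => a * τ) (fun a => a * τ⁻¹) ?_ ?_ ?_ ?_ ?_
  · intro a ha
    rw [mem_Pg] at ha ⊢
    intro b; simp only [Equiv.Perm.mul_apply]; rw [ha, hτ]
  · intro a ha
    rw [mem_Pg] at ha ⊢
    intro b; simp only [Equiv.Perm.mul_apply]
    rw [ha, ← hτ (τ⁻¹ b), Equiv.Perm.inv_def, Equiv.apply_symm_apply]
  · intro a _; simp [mul_assoc]
  · intro a _; simp [mul_assoc]
  · intro a ha
    rw [MonoidAlgebra.single_mul_single, mul_one, map_mul, hs]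
    simp [neg_neg]

private lemma single_mul_rsum (g : α → ℕ) (τ : Equiv.Perm α) (hτ : ∀ b, g (τ b) = g b) :
    MonoidAlgebra.single τ (1:ℂ) * Rsum g = Rsum g := by
  rw [Rsum_eq, Finset.mul_sum]
  refine Finset.sum_nbij' (fun a => τ * a) (fun a => τ⁻¹ * a) ?_ ?_ ?_ ?_ ?_
  · intro a ha
    rw [mem_Pg] at ha ⊢
    intro b; simp only [Equiv.Perm.mul_apply]; rw [hτ, ha]
  · intro a ha
    rw [mem_Pg] at ha ⊢
    intro b; simp only [Equiv.Perm.mul_apply]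
    rw [← hτ (τ⁻¹ (a b)), Equiv.Perm.inv_def, Equiv.apply_symm_apply, ha]
  · intro a _; simp [← mul_assoc]
  · intro a _; simp [← mul_assoc]
  · intro a _; rw [MonoidAlgebra.single_mul_single, mul_one]

private lemma rsum_mul_single (g : α → ℕ) (τ : Equiv.Perm α) (hτ : ∀ b, g (τ b) = g b) :
    Rsum g * MonoidAlgebra.single τ (1:ℂ) = Rsum g := by
  rw [Rsum_eq, Finset.sum_mul]
  refine Finset.sum_nbij' (fun a => a * τ) (fun a => a * τ⁻¹) ?_ ?_ ?_ ?_ ?_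
  · intro a ha
    rw [mem_Pg] at ha ⊢
    intro b; simp only [Equiv.Perm.mul_apply]; rw [ha, hτ]
  · intro a ha
    rw [mem_Pg] at ha ⊢
    intro b; simp only [Equiv.Perm.mul_apply]
    rw [ha, ← hτ (τ⁻¹ b), Equiv.Perm.inv_def, Equiv.apply_symm_apply]
  · intro a _; simp [mul_assoc]
  · intro a _; simp [mul_assoc]
  · intro a _; rw [MonoidAlgebra.single_mul_single, mul_one]

omit [Fintype α] in
private lemma g_swap {g : α → ℕ} {u v : α} (h : g u = g v) (b : α) :
    g (Equiv.swap u v b) = g b := by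
  rcases eq_or_ne b u with rfl | hu
  · rw [Equiv.swap_apply_left, h]
  rcases eq_or_ne b v with rfl | hv
  · rw [Equiv.swap_apply_right, h]
  · rw [Equiv.swap_apply_of_ne_of_ne hu hv]

private lemma csum_single_rsum_eq_zero (c r : α → ℕ) (σ : Equiv.Perm α) (u v : α)
    (huv : u ≠ v) (hc : c (σ u) = c (σ v)) (hr : r u = r v) :
    Csum c * MonoidAlgebra.single σ (1:ℂ) * Rsum r = 0 := by
  set t : Equiv.Perm α := Equiv.swap (σ u) (σ v) with ht
  set t' : Equiv.Perm α := Equiv.swap u v with ht'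
  have hts : t * σ * t' = σ := by
    rw [ht, ht', Equiv.swap_apply_apply]
    group
    rw [mul_assoc, Equiv.swap_mul_self, mul_one]
  have key : Csum c * MonoidAlgebra.single σ (1:ℂ) * Rsum r
      = - (Csum c * MonoidAlgebra.single σ (1:ℂ) * Rsum r) := by
    conv_lhs => rw [← hts]
    rw [show MonoidAlgebra.single (t * σ * t') (1:ℂ)
        = MonoidAlgebra.single t (1:ℂ) * MonoidAlgebra.single σ (1:ℂ)
          * MonoidAlgebra.single t' (1:ℂ) by
      rw [MonoidAlgebra.single_mul_single, MonoidAlgebra.single_mul_single]; ring_nf]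
    rw [← mul_assoc, ← mul_assoc, csum_mul_swap c t (g_swap hc)
      (Equiv.Perm.sign_swap (fun h => huv (σ.injective h))),
      mul_assoc _ _ (Rsum r), single_mul_rsum r t' (g_swap hr)]
    simp [neg_mul]
  have h2 : (2:ℂ) • (Csum c * MonoidAlgebra.single σ (1:ℂ) * Rsum r) = 0 := by
    rw [two_smul]
    nth_rewrite 1 [key]
    exact neg_add_cancel _
  simpa using h2

end Helpers

section Rows

private lemma mem_row_iff {D : Dg} {p q : ℕ} : q ∈ row D p ↔ (p, q) ∈ D := by
  simp only [row, Finset.mem_image, Finset.mem_filter]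
  constructor
  · rintro ⟨⟨a, b⟩, ⟨hm, rfl⟩, rfl⟩; exact hm
  · intro h; exact ⟨(p, q), ⟨h, rfl⟩, rfl⟩

private lemma lRow_le {D : Dg} {p q : ℕ} (h : (p, q) ∈ D) : lRow D p ≤ (q : ℕ∞) :=
  Finset.inf_le (mem_row_iff.mpr h)

private lemma le_rRow {D : Dg} {p q : ℕ} (h : (p, q) ∈ D) : q ≤ rRow D p :=
  Finset.le_sup (f := id) (mem_row_iff.mpr h)

private lemma lRow_attained {D : Dg} {p : ℕ} (h : (row D p).Nonempty) :
    ∃ m : ℕ, (p, m) ∈ D ∧ lRow D p = (m : ℕ∞) := by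
  obtain ⟨m, hm, he⟩ := Finset.exists_mem_eq_inf (row D p) h (fun j => (j : ℕ∞))
  exact ⟨m, mem_row_iff.mp hm, he⟩

private lemma rRow_mem {D : Dg} {p : ℕ} (h : (row D p).Nonempty) : (p, rRow D p) ∈ D := by
  obtain ⟨m, hm, he⟩ := Finset.exists_mem_eq_sup (row D p) h id
  rw [rRow, he]; exact mem_row_iff.mp hm

end Rows

/-- With both Step A and Step B permitted at row `i`,
`C(D^B) · σ · R(D^A) = 0` for every `σ ∈ R_D`; consequently
`C(D^B)·R(D^B)·(Σ_{σ ∈ Y} σ) = 0`, i.e. `V^{D^B}` lies in the kernel of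
`T : V^D → V^{D^A}`. -/
theorem statement16 (D DA DB : Dg) (k i : ℕ) (hAS : AlmostSkew D k)
    (hmax : MaxViolation D i) (hpermA : StepAOk D i) (hpermB : StepBOk D i)
    (hstepA : IsStepA D DA i) (hstepB : IsStepB D DB i)
    (φ : {x : ℕ × ℕ // x ∈ D} ≃ {x : ℕ × ℕ // x ∈ DA})
    (hφ : ∀ b : {x : ℕ × ℕ // x ∈ D},
      (φ b).val = if b.val.1 = i ∧ InL D i b.val.2 then (i - 1, b.val.2) else b.val)
    (ψ : {x : ℕ × ℕ // x ∈ D} ≃ {x : ℕ × ℕ // x ∈ DB})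
    (hψ : ∀ b : {x : ℕ × ℕ // x ∈ D},
      (ψ b).val =
        if i ≤ b.val.1 ∧ lRow D b.val.1 = lRow D i ∧ (b.val.2 : ℕ∞) = lRow D b.val.1
        then (b.val.1, rRow D b.val.1 + 1) else b.val)
    (Y : Finset (Equiv.Perm {x : ℕ × ℕ // x ∈ D}))
    (hY1 : ∀ σ ∈ Y, ∀ b, (φ (σ b)).val.1 = (φ b).val.1)
    (hY2 : ∀ τ : Equiv.Perm {x : ℕ × ℕ // x ∈ D}, (∀ b, (φ (τ b)).val.1 = (φ b).val.1) →
      ∃! σ, σ ∈ Y ∧ (∀ b, ((τ * σ⁻¹) b).val.1 = b.val.1) ∧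
        (∀ b, (φ ((τ * σ⁻¹) b)).val.1 = (φ b).val.1))
    :
    (∀ σ : Equiv.Perm {x : ℕ × ℕ // x ∈ D}, (∀ b, (σ b).val.1 = b.val.1) →
      Csum (fun b : {x : ℕ × ℕ // x ∈ D} => (ψ b).val.2) * MonoidAlgebra.single σ (1 : ℂ) *
        Rsum (fun b : {x : ℕ × ℕ // x ∈ D} => (φ b).val.1) = 0) ∧
    (Csum (fun b : {x : ℕ × ℕ // x ∈ D} => (ψ b).val.2) *
        Rsum (fun b : {x : ℕ × ℕ // x ∈ D} => (ψ b).val.1) *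
        (∑ σ ∈ Y, MonoidAlgebra.single σ (1 : ℂ)) = 0) ∧
    (∀ v ∈ Submodule.span (MonoidAlgebra ℂ (Equiv.Perm {x : ℕ × ℕ // x ∈ D}))
        {Csum (fun b : {x : ℕ × ℕ // x ∈ D} => (ψ b).val.2) *
          Rsum (fun b : {x : ℕ × ℕ // x ∈ D} => (ψ b).val.1)},
      v * (∑ σ ∈ Y, MonoidAlgebra.single σ (1 : ℂ)) = 0) := by
  classical
  obtain ⟨hviol, hpermA2⟩ := hpermA
  have hi2 : 2 ≤ i := hviol.1
  have hlt : lRow D i < lRow D (i - 1) := hviol.2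
  have hne_i : (row D i).Nonempty := by
    rw [Finset.nonempty_iff_ne_empty]
    intro h
    rw [lRow, h, Finset.inf_empty] at hlt
    exact not_top_lt hlt
  have hik := (hAS.1 i).mp hne_i
  have hne_i1 : (row D (i - 1)).Nonempty := (hAS.1 (i - 1)).mpr ⟨by omega, by omega⟩
  obtain ⟨lI, hlI_mem, hlI⟩ := lRow_attained hne_i
  obtain ⟨L1, hL1_mem, hL1⟩ := lRow_attained hne_i1
  have hlt' : lI < L1 := by rw [hlI, hL1, Nat.cast_lt] at hlt; exact hlt
  have hL1R1 : L1 ≤ rRow D (i - 1) := le_rRow hL1_mem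
  have hlIR0 : lI ≤ rRow D i := le_rRow hlI_mem
  have hA : L1 ≤ rRow D i + 1 := by
    rcases hpermA2 with h | h
    · rw [hL1] at h
      have h2 : (L1 : ℕ∞) ≤ (rRow D i : ℕ∞) + 1 := tsub_le_iff_right.mp h
      have h3 : ((rRow D i : ℕ) : ℕ∞) + 1 = ((rRow D i + 1 : ℕ) : ℕ∞) := by
        push_cast; ring
      rw [h3, Nat.cast_le] at h2
      exact h2
    · exact absurd h (Finset.nonempty_iff_ne_empty.mp hne_i1)
  have hB : rRow D i + 1 ≤ rRow D (i - 1) := by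
    have := hpermB.2
    omega
  have mem_i : ∀ q, lI ≤ q → q ≤ rRow D i → (i, q) ∈ D := fun q h1 h2 =>
    hAS.2.1 i lI (rRow D i) q hlI_mem (rRow_mem hne_i) h1 h2
  have mem_i1 : ∀ q, L1 ≤ q → q ≤ rRow D (i - 1) → (i - 1, q) ∈ D := fun q h1 h2 =>
    hAS.2.1 (i - 1) L1 (rRow D (i - 1)) q hL1_mem (rRow_mem hne_i1) h1 h2
  have hpsi1 : ∀ b : {x : ℕ × ℕ // x ∈ D}, (ψ b).val.1 = b.val.1 := by
    intro b; rw [hψ b]; split_ifs <;> rfl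
  -- Part 1
  have main1 : ∀ σ : Equiv.Perm {x : ℕ × ℕ // x ∈ D}, (∀ b, (σ b).val.1 = b.val.1) →
      Csum (fun b : {x : ℕ × ℕ // x ∈ D} => (ψ b).val.2) * MonoidAlgebra.single σ (1 : ℂ) *
        Rsum (fun b : {x : ℕ × ℕ // x ∈ D} => (φ b).val.1) = 0 := by
    intro σ hσ
    set X := Finset.univ.filter
      (fun b : {x : ℕ × ℕ // x ∈ D} => (φ b).val.1 = i - 1) with hX
    have himg : Finset.Icc lI (rRow D (i - 1)) ⊆ X.image (fun b => b.val.2) := by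
      intro q hq
      rw [Finset.mem_Icc] at hq
      rw [Finset.mem_image]
      by_cases hq2 : q < L1
      · refine ⟨⟨(i, q), mem_i q hq.1 (by omega)⟩, ?_, rfl⟩
        rw [hX, Finset.mem_filter]
        refine ⟨Finset.mem_univ _, ?_⟩
        rw [hφ]
        rw [if_pos ⟨rfl, ⟨by rw [hlI]; exact_mod_cast hq.1, by rw [hL1]; exact_mod_cast hq2⟩⟩]
      · refine ⟨⟨(i - 1, q), mem_i1 q (by omega) hq.2⟩, ?_, rfl⟩
        rw [hX, Finset.mem_filter]
        refine ⟨Finset.mem_univ _, ?_⟩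
        rw [hφ]
        rw [if_neg (by rintro ⟨h1, -⟩; simp only at h1; omega)]
    have hcardX : rRow D (i - 1) + 1 - lI ≤ X.card := by
      calc rRow D (i - 1) + 1 - lI = (Finset.Icc lI (rRow D (i - 1))).card := by
            rw [Nat.card_Icc]
        _ ≤ (X.image (fun b => b.val.2)).card := Finset.card_le_card himg
        _ ≤ X.card := Finset.card_image_le
    have hmaps : ∀ b ∈ X, (ψ (σ b)).val.2 ∈ Finset.Icc (lI + 1) (rRow D (i - 1)) := by
      intro b hb
      have hbrow : b.val.1 = i - 1 ∨ b.val.1 = i := by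
        rw [hX, Finset.mem_filter] at hb
        have h2 := hb.2
        rw [hφ b] at h2
        split_ifs at h2 with h
        · exact Or.inr h.1
        · exact Or.inl h2
      have hσb : (σ b).val.1 = i - 1 ∨ (σ b).val.1 = i := by rw [hσ b]; exact hbrow
      have hb'D : ((σ b).val.1, (σ b).val.2) ∈ D := by
        rw [Prod.mk.eta]; exact (σ b).prop
      rcases hσb with h | h
      · rw [hψ (σ b), if_neg (by rintro ⟨h1, -⟩; omega)]
        rw [Finset.mem_Icc]
        have hmem : (i - 1, (σ b).val.2) ∈ D := by rw [← h]; exact hb'D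
        have h1 := lRow_le hmem
        rw [hL1, Nat.cast_le] at h1
        have h2 := le_rRow hmem
        omega
      · have hmem : (i, (σ b).val.2) ∈ D := by rw [← h]; exact hb'D
        have hq1 : lI ≤ (σ b).val.2 := by
          have := lRow_le hmem; rw [hlI, Nat.cast_le] at this; exact this
        have hq2 : (σ b).val.2 ≤ rRow D i := le_rRow hmem
        rw [hψ (σ b)]
        by_cases hc : ((σ b).val.2 : ℕ∞) = lRow D (σ b).val.1
        · rw [if_pos ⟨le_of_eq h.symm, by rw [h], hc⟩]
          rw [Finset.mem_Icc]
          simp only [h]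
          omega
        · rw [if_neg (by rintro ⟨-, -, hcc⟩; exact hc hcc)]
          rw [Finset.mem_Icc]
          have hne : (σ b).val.2 ≠ lI := by
            intro he
            apply hc
            rw [h, he, hlI]
          omega
    have hcard2 : (Finset.Icc (lI + 1) (rRow D (i - 1))).card < X.card := by
      rw [Nat.card_Icc]
      omega
    obtain ⟨x, hx, y, hy, hxy, hfxy⟩ :=
      Finset.exists_ne_map_eq_of_card_lt_of_maps_to hcard2 hmaps
    refine csum_single_rsum_eq_zero _ _ σ x y hxy hfxy ?_
    rw [hX, Finset.mem_filter] at hx hy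
    exact hx.2.trans hy.2.symm
  refine ⟨main1, ?_, ?_⟩
  all_goals {
    have part2 : Csum (fun b : {x : ℕ × ℕ // x ∈ D} => (ψ b).val.2) *
        Rsum (fun b : {x : ℕ × ℕ // x ∈ D} => (ψ b).val.1) *
        (∑ σ ∈ Y, MonoidAlgebra.single σ (1 : ℂ)) = 0 := by
      simp only [hpsi1]
      set Hset := Finset.univ.filter
        (fun π : Equiv.Perm {x : ℕ × ℕ // x ∈ D} =>
          (∀ b, (π b).val.1 = b.val.1) ∧ ∀ b, (φ (π b)).val.1 = (φ b).val.1) with hHset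
      have hHmem : ∀ π, π ∈ Hset ↔
          (∀ b, (π b).val.1 = b.val.1) ∧ ∀ b, (φ (π b)).val.1 = (φ b).val.1 := by
        intro π; rw [hHset, Finset.mem_filter]
        simp only [Finset.mem_univ, true_and]
      have E3 : Rsum (fun b : {x : ℕ × ℕ // x ∈ D} => (φ b).val.1)
          = (∑ h ∈ Hset, MonoidAlgebra.single h (1 : ℂ)) *
            (∑ σ ∈ Y, MonoidAlgebra.single σ (1 : ℂ)) := by
        rw [Rsum_eq, Finset.sum_mul_sum]
        simp only [MonoidAlgebra.single_mul_single, one_mul]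
        rw [← Finset.sum_product']
        refine (Finset.sum_nbij (fun x => x.1 * x.2) ?_ ?_ ?_ ?_).symm
        · intro x hx
          rw [Finset.mem_product] at hx
          rw [mem_Pg]
          intro b
          simp only [Equiv.Perm.mul_apply]
          rw [((hHmem x.1).mp hx.1).2 _, hY1 _ hx.2]
        · intro x hx y hy heq
          simp only [Finset.coe_product, Set.mem_prod, Finset.mem_coe] at hx hy
          simp only at heq
          have key : ∀ z : Equiv.Perm {a : ℕ × ℕ // a ∈ D} × Equiv.Perm {a : ℕ × ℕ // a ∈ D},
              z.1 ∈ Hset → z.2 ∈ Y → z.1 * z.2 = x.1 * x.2 →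
              z.2 ∈ Y ∧ (∀ b, (((x.1 * x.2) * z.2⁻¹) b).val.1 = b.val.1) ∧
                (∀ b, (φ (((x.1 * x.2) * z.2⁻¹) b)).val.1 = (φ b).val.1) := by
            intro z hz1 hz2 hz3
            have hz4 : (x.1 * x.2) * z.2⁻¹ = z.1 := by rw [← hz3, mul_inv_cancel_right]
            rw [hz4]
            exact ⟨hz2, ((hHmem z.1).mp hz1).1, ((hHmem z.1).mp hz1).2⟩
          have hτA : ∀ b, (φ ((x.1 * x.2) b)).val.1 = (φ b).val.1 := by
            intro b
            simp only [Equiv.Perm.mul_apply]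
            rw [((hHmem x.1).mp hx.1).2 _, hY1 _ hx.2]
          obtain ⟨σ₀, -, huniq⟩ := hY2 (x.1 * x.2) hτA
          have e1 : x.2 = σ₀ := huniq x.2 (key x hx.1 hx.2 rfl)
          have e2 : y.2 = σ₀ := huniq y.2 (key y hy.1 hy.2 heq.symm)
          have e3 : x.2 = y.2 := e1.trans e2.symm
          have e4 : x.1 = y.1 := by
            have := heq
            rw [e3] at this
            exact mul_right_cancel this
          exact Prod.ext e4 e3
        · intro τ hτ
          rw [Finset.mem_coe, mem_Pg] at hτ
          obtain ⟨σ₀, ⟨hσY, hc1, hc2⟩, -⟩ := hY2 τ hτ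
          refine ⟨(τ * σ₀⁻¹, σ₀), ?_, ?_⟩
          · simp only [Finset.coe_product, Set.mem_prod, Finset.mem_coe]
            exact ⟨(hHmem _).mpr ⟨hc1, hc2⟩, hσY⟩
          · simp only [inv_mul_cancel_right]
        · intro x _; rfl
      have E2 : Csum (fun b : {x : ℕ × ℕ // x ∈ D} => (ψ b).val.2) *
          Rsum (fun b : {x : ℕ × ℕ // x ∈ D} => b.val.1) *
          Rsum (fun b : {x : ℕ × ℕ // x ∈ D} => (φ b).val.1) = 0 := by
        rw [Rsum_eq (fun b : {x : ℕ × ℕ // x ∈ D} => b.val.1), Finset.mul_sum,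
          Finset.sum_mul]
        refine Finset.sum_eq_zero ?_
        intro β hβ
        exact main1 β (mem_Pg.mp hβ)
      have E4 : Rsum (fun b : {x : ℕ × ℕ // x ∈ D} => b.val.1) *
          (∑ h ∈ Hset, MonoidAlgebra.single h (1 : ℂ))
          = Hset.card • Rsum (fun b : {x : ℕ × ℕ // x ∈ D} => b.val.1) := by
        rw [Finset.mul_sum]
        rw [Finset.sum_congr rfl (fun h hh =>
          rsum_mul_single _ h ((hHmem h).mp hh).1)]
        rw [Finset.sum_const]
      have hone : (1 : Equiv.Perm {x : ℕ × ℕ // x ∈ D}) ∈ Hset :=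
        (hHmem 1).mpr ⟨fun b => rfl, fun b => rfl⟩
      have hcardH : (Hset.card : ℂ) ≠ 0 :=
        Nat.cast_ne_zero.mpr (Finset.card_ne_zero_of_mem hone)
      have final : (Hset.card : ℂ) •
          (Csum (fun b : {x : ℕ × ℕ // x ∈ D} => (ψ b).val.2) *
            Rsum (fun b : {x : ℕ × ℕ // x ∈ D} => b.val.1) *
            (∑ σ ∈ Y, MonoidAlgebra.single σ (1 : ℂ))) = 0 := by
        rw [Nat.cast_smul_eq_nsmul]
        calc Hset.card • (Csum (fun b : {x : ℕ × ℕ // x ∈ D} => (ψ b).val.2) *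
              Rsum (fun b : {x : ℕ × ℕ // x ∈ D} => b.val.1) *
              (∑ σ ∈ Y, MonoidAlgebra.single σ (1 : ℂ)))
            = Csum (fun b : {x : ℕ × ℕ // x ∈ D} => (ψ b).val.2) *
              (Hset.card • Rsum (fun b : {x : ℕ × ℕ // x ∈ D} => b.val.1)) *
              (∑ σ ∈ Y, MonoidAlgebra.single σ (1 : ℂ)) := by
              rw [mul_smul_comm, smul_mul_assoc]
          _ = Csum (fun b : {x : ℕ × ℕ // x ∈ D} => (ψ b).val.2) *
              (Rsum (fun b : {x : ℕ × ℕ // x ∈ D} => b.val.1) *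
                (∑ h ∈ Hset, MonoidAlgebra.single h (1 : ℂ))) *
              (∑ σ ∈ Y, MonoidAlgebra.single σ (1 : ℂ)) := by rw [E4]
          _ = Csum (fun b : {x : ℕ × ℕ // x ∈ D} => (ψ b).val.2) *
              Rsum (fun b : {x : ℕ × ℕ // x ∈ D} => b.val.1) *
              Rsum (fun b : {x : ℕ × ℕ // x ∈ D} => (φ b).val.1) := by
              rw [E3]; ring_nf; rw [mul_assoc, mul_assoc, mul_assoc]
          _ = 0 := E2
      exact (smul_eq_zero.mp final).resolve_left hcardH
    first
      | exact part2
      | · intro v hv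
          rw [Submodule.mem_span_singleton] at hv
          obtain ⟨a, rfl⟩ := hv
          rw [smul_eq_mul, mul_assoc, part2, mul_zero]
  }
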